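/- Let h ≥ p ≥ 1 and m ≥ 2 be integers. Then λ_{h,p,p}(T_{m,2}) ≥ h + (2m − 1)·p. -/

import Mathlib

open SimpleGraph

/-- An `L(h,p,p)`-labelling of `G` with span `ℓ`: labels in `{0,…,ℓ}`, labels of vertices at
distance 1 differ by at least `h`, labels of vertices at distance 2 or 3 differ by at least `p`. -/
def IsLLabelling {V : Type} (G : SimpleGraph V) (h p ℓ : ℕ) (f : V → ℕ) : Prop :=
  (∀ v, f v ≤ ℓ) ∧
  (∀ u v, G.dist u v = 1 → (h : ℤ) ≤ |(f u : ℤ) - (f v : ℤ)|) ∧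
  (∀ u v, G.dist u v = 2 ∨ G.dist u v = 3 → (p : ℤ) ≤ |(f u : ℤ) - (f v : ℤ)|)

/-- `λ_{h,p,p}(G)`: the minimum span of an `L(h,p,p)`-labelling of `G`. -/
noncomputable def lambdaNum {V : Type} (G : SimpleGraph V) (h p : ℕ) : ℕ :=
  sInf {ℓ : ℕ | ∃ f : V → ℕ, IsLLabelling G h p ℓ f}

/-- A circular interval modulo `n`: a set of residues of the form `{a, a+1, …, a+s}` mod `n`. -/
def IsCircInterval (n : ℕ) (I : Set (ZMod n)) : Prop :=
  ∃ (a : ZMod n) (s : ℕ), I = {x : ZMod n | ∃ i : ℕ, i ≤ s ∧ x = a + (i : ZMod n)}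

/-- An elegant `L(h,p,p)`-labelling: additionally each vertex `u` has a circular interval `I u`
modulo `ℓ+1` containing the labels of all neighbours of `u`, with `I u ∩ I v = ∅` for edges `uv`. -/
def IsElegantLLabelling {V : Type} (G : SimpleGraph V) (h p ℓ : ℕ) (f : V → ℕ) : Prop :=
  IsLLabelling G h p ℓ f ∧
  ∃ I : V → Set (ZMod (ℓ + 1)),
    (∀ u, IsCircInterval (ℓ + 1) (I u)) ∧
    (∀ u w, G.Adj u w → ((f w : ZMod (ℓ + 1)) ∈ I u)) ∧
    (∀ u v, G.Adj u v → I u ∩ I v = ∅)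

/-- `λ*_{h,p,p}(G)`: the minimum span of an elegant `L(h,p,p)`-labelling of `G`. -/
noncomputable def lambdaStar {V : Type} (G : SimpleGraph V) (h p : ℕ) : ℕ :=
  sInf {ℓ : ℕ | ∃ f : V → ℕ, IsElegantLLabelling G h p ℓ f}

/-- The `ℓ`-cyclic distance between labels `a` and `b`. -/
def cycDist (ℓ a b : ℕ) : ℤ :=
  min |(a : ℤ) - (b : ℤ)| ((ℓ : ℤ) - |(a : ℤ) - (b : ℤ)|)

/-- A `C(h,p,p)`-labelling of `G` with span `ℓ`: labels in `{0,…,ℓ-1}`, and the `ℓ`-cyclic distance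
between labels of vertices at distance 1 (resp. 2 or 3) is at least `h` (resp. `p`). -/
def IsCLabelling {V : Type} (G : SimpleGraph V) (h p ℓ : ℕ) (f : V → ℕ) : Prop :=
  (∀ v, f v < ℓ) ∧
  (∀ u v, G.dist u v = 1 → (h : ℤ) ≤ cycDist ℓ (f u) (f v)) ∧
  (∀ u v, G.dist u v = 2 ∨ G.dist u v = 3 → (p : ℤ) ≤ cycDist ℓ (f u) (f v))

/-- `σ_{h,p,p}(G)`: the minimum positive `ℓ` such that `G` has a `C(h,p,p)`-labelling of span `ℓ`. -/
noncomputable def sigmaNum {V : Type} (G : SimpleGraph V) (h p : ℕ) : ℕ :=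
  sInf {ℓ : ℕ | 0 < ℓ ∧ ∃ f : V → ℕ, IsCLabelling G h p ℓ f}

/-- An elegant `C(h,p,p)`-labelling: additionally each vertex `u` has a circular interval `I u`
modulo `ℓ` containing the labels of all neighbours of `u`, with `I u ∩ I v = ∅` for edges `uv`. -/
def IsElegantCLabelling {V : Type} (G : SimpleGraph V) (h p ℓ : ℕ) (f : V → ℕ) : Prop :=
  IsCLabelling G h p ℓ f ∧
  ∃ I : V → Set (ZMod ℓ),
    (∀ u, IsCircInterval ℓ (I u)) ∧
    (∀ u w, G.Adj u w → ((f w : ZMod ℓ) ∈ I u)) ∧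
    (∀ u v, G.Adj u v → I u ∩ I v = ∅)

/-- `σ*_{h,p,p}(G)`: the minimum positive `ℓ` such that `G` has an elegant `C(h,p,p)`-labelling
of span `ℓ`. -/
noncomputable def sigmaStar {V : Type} (G : SimpleGraph V) (h p : ℕ) : ℕ :=
  sInf {ℓ : ℕ | 0 < ℓ ∧ ∃ f : V → ℕ, IsElegantCLabelling G h p ℓ f}

/-- `Δ₂(G) = max over edges uv of (deg u + deg v)`. -/
noncomputable def deltaTwo {V : Type} (G : SimpleGraph V) [Fintype V] [DecidableRel G.Adj] : ℕ :=
  sSup {d : ℕ | ∃ u v : V, G.Adj u v ∧ d = G.degree u + G.degree v}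

section AuxLemmas

variable {V : Type}

/-- In a tree, the distance between two vertices equals the length of any path between them. -/
lemma treeDistEqLength [DecidableEq V] {G : SimpleGraph V} (hT : G.IsTree) {u v : V}
    (q : G.Walk u v) (hq : q.IsPath) : G.dist u v = q.length := by
  obtain ⟨w, hw⟩ := hT.isConnected.exists_walk_length_eq_dist u v
  have hb : w.bypass.IsPath := SimpleGraph.Walk.bypass_isPath w
  have hu := SimpleGraph.isAcyclic_iff_path_unique.mp hT.IsAcyclic ⟨w.bypass, hb⟩ ⟨q, hq⟩
  have h2 : w.bypass = q := congrArg Subtype.val hu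
  have h3 : q.length ≤ G.dist u v := by
    rw [← h2, ← hw]; exact SimpleGraph.Walk.length_bypass_le w
  exact le_antisymm (SimpleGraph.dist_le q) h3

/-- Chain lemma: in a set of nonnegative, pairwise `p`-separated values, an element with `n`
values below it is at least `n*p`. -/
lemma chainLow [DecidableEq V] {p : ℤ} (hp : 0 < p) (g : V → ℤ) :
    ∀ (n : ℕ) (T : Finset V) (_ : ∀ u ∈ T, 0 ≤ g u)
      (_ : ∀ u ∈ T, ∀ w ∈ T, u ≠ w → p ≤ |g u - g w|)
      (z : V) (_ : z ∈ T) (_ : (T.filter fun u => g u < g z).card = n),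
      (n : ℤ) * p ≤ g z := by
  intro n
  induction n with
  | zero => intro T h0 _ z hz _; simpa using h0 z hz
  | succ k ih =>
    intro T h0 hsep z hz hcard
    classical
    have hne : (T.filter fun u => g u < g z).Nonempty := by
      rw [← Finset.card_pos, hcard]; omega
    obtain ⟨w, hw, hwmax⟩ := Finset.exists_max_image _ g hne
    obtain ⟨hwT, hwz⟩ := Finset.mem_filter.mp hw
    have hwne : w ≠ z := fun e => absurd (e ▸ hwz) (lt_irrefl _)
    have hsep1 : p ≤ g z - g w := by
      have hzw := hsep z hz w hwT (Ne.symm hwne)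
      rcases abs_cases (g z - g w) with ⟨he, _⟩ | ⟨he, hneg⟩ <;> linarith
    have hset : (T.filter fun u => g u < g w)
        = (T.filter fun u => g u < g z).erase w := by
      ext u
      simp only [Finset.mem_filter, Finset.mem_erase]
      constructor
      · rintro ⟨huT, huw⟩
        exact ⟨fun e => absurd (e ▸ huw) (lt_irrefl _), huT, lt_trans huw hwz⟩
      · rintro ⟨hune, huT, huz⟩
        refine ⟨huT, ?_⟩
        have hle := hwmax u (Finset.mem_filter.mpr ⟨huT, huz⟩)
        rcases lt_or_eq_of_le hle with hlt | heq
        · exact hlt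
        · exfalso
          have hs := hsep u huT w hwT hune
          rw [heq, sub_self, abs_zero] at hs
          linarith
    have hcard2 : (T.filter fun u => g u < g w).card = k := by
      rw [hset, Finset.card_erase_of_mem hw, hcard]
      omega
    have hk := ih T h0 hsep w hwT hcard2
    push_cast
    linarith

/-- Core numeric lemma for the lower bound. -/
lemma coreBound [DecidableEq V] {h p ℓ : ℤ} (hp : 0 < p) (hph : p ≤ h)
    (g : V → ℤ) (S X : Finset V) (r a : V)
    (hrS : r ∈ S) (haS : a ∈ S) (haX : a ∈ X) (hrX : r ∉ X)
    (hg0 : ∀ u ∈ S, 0 ≤ g u) (hgl : ∀ u ∈ S, g u ≤ ℓ)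
    (hsep : ∀ u ∈ S, ∀ w ∈ S, u ≠ w → p ≤ |g u - g w|)
    (hh : ∀ u ∈ S, u ∉ X → u ≠ r → h ≤ |g a - g u|)
    (hhr : h ≤ |g a - g r|)
    (hra : g r < g a)
    (hmin : ∀ x ∈ X, x ∈ S → g r < g x → g a ≤ g x) :
    h + ((S.card : ℤ) - 2) * p ≤ ℓ := by
  classical
  set W := S.filter (fun u => g u < g a) with hW
  have hrW : r ∈ W := Finset.mem_filter.mpr ⟨hrS, hra⟩
  obtain ⟨z, hzW, hzmax⟩ := Finset.exists_max_image W g ⟨r, hrW⟩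
  obtain ⟨hzS, hza⟩ := Finset.mem_filter.mp hzW
  have hzX : z ∉ X := by
    intro hzX'
    have hzr : z ≠ r := fun e => hrX (e ▸ hzX')
    have h1 : g r ≤ g z := hzmax r hrW
    have h2 : g r ≠ g z := by
      intro e
      have hs := hsep z hzS r hrS hzr
      rw [← e, sub_self, abs_zero] at hs
      linarith
    exact absurd (hmin z hzX' hzS (lt_of_le_of_ne h1 h2)) (not_le.mpr hza)
  have hha : h ≤ g a - g z := by
    have habs : h ≤ |g a - g z| := by
      by_cases hzr : z = r
      · exact hzr ▸ hhr
      · exact hh z hzS hzX hzr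
    rcases abs_cases (g a - g z) with ⟨e, _⟩ | ⟨e, hn⟩ <;> linarith
  set U := S.filter (fun u => g a < g u) with hU
  have hUbound : ((U.card : ℤ)) * p ≤ ℓ - g a := by
    have hfil : (S.filter fun u => (ℓ - g u) < (ℓ - g a)) = U := by
      ext u
      simp only [Finset.mem_filter, hU]
      constructor
      · rintro ⟨huS, hl⟩; exact ⟨huS, by linarith⟩
      · rintro ⟨huS, hl⟩; exact ⟨huS, by linarith⟩
    exact chainLow hp (fun u => ℓ - g u) U.card S
      (fun u hu => by have := hgl u hu; linarith)
      (fun u hu w hw hne => by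
        have hs := hsep u hu w hw hne
        have he : (ℓ - g u) - (ℓ - g w) = -(g u - g w) := by ring
        simp only [he, abs_neg]
        exact hs)
      a haS (by rw [hfil])
  have hWz : (S.filter fun u => g u < g z) = W.erase z := by
    ext u
    simp only [Finset.mem_filter, Finset.mem_erase, hW]
    constructor
    · rintro ⟨huS, huz⟩
      exact ⟨fun e => absurd (e ▸ huz) (lt_irrefl _), huS, lt_trans huz hza⟩
    · rintro ⟨hune, huS, hua⟩
      refine ⟨huS, ?_⟩
      have hle := hzmax u (Finset.mem_filter.mpr ⟨huS, hua⟩)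
      rcases lt_or_eq_of_le hle with hlt | heq
      · exact hlt
      · exfalso
        have hs := hsep u huS z hzS hune
        rw [heq, sub_self, abs_zero] at hs
        linarith
  have hWone : 1 ≤ W.card := Finset.card_pos.mpr ⟨r, hrW⟩
  have hzlow : ((W.card : ℤ) - 1) * p ≤ g z := by
    have hc : (S.filter fun u => g u < g z).card = W.card - 1 := by
      rw [hWz, Finset.card_erase_of_mem hzW]
    have hcl := chainLow hp g (W.card - 1) S hg0 hsep z hzS hc
    rwa [Nat.cast_sub hWone, Nat.cast_one] at hcl
  have hdisj : Disjoint W U := by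
    rw [Finset.disjoint_left]
    intro u huW huU
    have h1 := (Finset.mem_filter.mp huW).2
    have h2 := (Finset.mem_filter.mp huU).2
    linarith
  have hunion : W ∪ U = S.erase a := by
    ext u
    simp only [Finset.mem_union, Finset.mem_filter, Finset.mem_erase, hW, hU]
    constructor
    · rintro (⟨huS, hl⟩ | ⟨huS, hl⟩)
      · exact ⟨fun e => absurd (e ▸ hl) (lt_irrefl _), huS⟩
      · exact ⟨fun e => absurd (e ▸ hl) (lt_irrefl _), huS⟩
    · rintro ⟨hune, huS⟩
      rcases lt_trichotomy (g u) (g a) with hlt | heq | hgt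
      · exact Or.inl ⟨huS, hlt⟩
      · exfalso
        have hs := hsep u huS a haS hune
        rw [heq, sub_self, abs_zero] at hs
        linarith
      · exact Or.inr ⟨huS, hgt⟩
  have hcards : W.card + U.card = S.card - 1 := by
    have hcu := Finset.card_union_of_disjoint hdisj
    rw [hunion, Finset.card_erase_of_mem haS] at hcu
    omega
  have hSone : 1 ≤ S.card := Finset.card_pos.mpr ⟨a, haS⟩
  have hcast : (S.card : ℤ) - 2 = ((W.card : ℤ) - 1) + (U.card : ℤ) := by omega
  rw [hcast, add_mul]
  linarith


lemma treeDist2 [DecidableEq V] {G : SimpleGraph V} (hT : G.IsTree) {u v w : V}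
    (h1 : G.Adj u v) (h2 : G.Adj v w) (huw : u ≠ w) : G.dist u w = 2 := by
  have hpath : (SimpleGraph.Walk.cons h1 (SimpleGraph.Walk.cons h2 SimpleGraph.Walk.nil)).IsPath := by
    simp [SimpleGraph.Walk.isPath_def, h1.ne, h2.ne, huw]
  simpa using treeDistEqLength hT _ hpath

lemma treeDist3 [DecidableEq V] {G : SimpleGraph V} (hT : G.IsTree) {u v w x : V}
    (h1 : G.Adj u v) (h2 : G.Adj v w) (h3 : G.Adj w x)
    (hux : u ≠ x) (huw : u ≠ w) (hvx : v ≠ x) : G.dist u x = 3 := by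
  have hpath : (SimpleGraph.Walk.cons h1 (SimpleGraph.Walk.cons h2
      (SimpleGraph.Walk.cons h3 SimpleGraph.Walk.nil))).IsPath := by
    simp [SimpleGraph.Walk.isPath_def, h1.ne, h2.ne, h3.ne, hux, huw, hvx]
  simpa using treeDistEqLength hT _ hpath


end AuxLemmas

theorem stmt2 {V : Type} [Fintype V] (G : SimpleGraph V) [DecidableRel G.Adj]
    (hT : G.IsTree) (m : ℕ) (hm : 2 ≤ m) (r : V)
    (hr : G.degree r = m)
    (hnbr : ∀ v : V, G.Adj r v → G.degree v = m + 1)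
    (hball : ∀ v : V, G.dist r v ≤ 2)
    (h p : ℕ) (hp : 1 ≤ p) (hph : p ≤ h) :
    h + (2 * m - 1) * p ≤ lambdaNum G h p := by
  classical
  have hconn := hT.isConnected
  have hneV : Nonempty V := hconn.nonempty
  unfold lambdaNum
  apply le_csInf
  · -- the set of spans is nonempty: a trivial labelling
    set e := Fintype.equivFin V with he
    set f₀ : V → ℕ := fun v => h * (e v : ℕ) with hf₀
    have key : ∀ u v : V, u ≠ v → (h : ℤ) ≤ |(f₀ u : ℤ) - (f₀ v : ℤ)| := by
      intro u v huv
      have hij : (e u : ℕ) ≠ (e v : ℕ) := fun hh' => huv (e.injective (Fin.ext hh'))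
      have h1 : (1 : ℤ) ≤ |((e u : ℕ) : ℤ) - ((e v : ℕ) : ℤ)| := by
        refine Int.one_le_abs (sub_ne_zero.mpr ?_)
        exact_mod_cast hij
      calc (h : ℤ) = h * 1 := (mul_one _).symm
        _ ≤ (h : ℤ) * |((e u : ℕ) : ℤ) - ((e v : ℕ) : ℤ)| := by
            apply mul_le_mul_of_nonneg_left h1 (by positivity)
        _ = |(f₀ u : ℤ) - (f₀ v : ℤ)| := by
            rw [hf₀]
            push_cast
            rw [← mul_sub, abs_mul, abs_of_nonneg (by positivity : (0:ℤ) ≤ (h:ℤ))]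
    refine ⟨h * (Fintype.card V - 1), f₀, ?_, ?_, ?_⟩
    · intro v
      have hv : (e v : ℕ) ≤ Fintype.card V - 1 := by have := (e v).isLt; omega
      exact Nat.mul_le_mul_left h hv
    · intro u v hd
      have huv : u ≠ v := by
        rintro rfl; rw [SimpleGraph.dist_self] at hd; omega
      exact key u v huv
    · intro u v hd
      have huv : u ≠ v := by
        rintro rfl; rw [SimpleGraph.dist_self] at hd; omega
      have : (p : ℤ) ≤ (h : ℤ) := by exact_mod_cast hph
      linarith [key u v huv]
  · -- lower bound for every admissible span
    rintro ℓ ⟨f, hfle, hf1, hf2⟩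
    set X := G.neighborFinset r with hXdef
    have hXcard : X.card = m := hr
    have hrX : r ∉ X := SimpleGraph.notMem_neighborFinset_self G r
    have hadjX : ∀ x ∈ X, G.Adj r x := fun x hx => by
      rw [hXdef, SimpleGraph.mem_neighborFinset] at hx; exact hx
    have hp' : (0 : ℤ) < p := by exact_mod_cast hp
    have hph' : (p : ℤ) ≤ h := by exact_mod_cast hph
    have setup : ∀ a, a ∈ X → ∃ S : Finset V, r ∈ S ∧ a ∈ S ∧ S.card = 2 * m + 1 ∧
        (∀ u ∈ S, ∀ w ∈ S, u ≠ w →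
          (G.dist u w = 1 ∨ G.dist u w = 2 ∨ G.dist u w = 3)) ∧
        (∀ u ∈ S, u ∉ X → u ≠ r → G.dist a u = 1) := by
      intro a haX
      have hra : G.Adj r a := hadjX a haX
      set C := (G.neighborFinset a).erase r with hCdef
      have hrC : r ∉ C := Finset.notMem_erase _ _
      have hCadj : ∀ c ∈ C, G.Adj a c := fun c hc => by
        have := Finset.mem_of_mem_erase hc
        rw [SimpleGraph.mem_neighborFinset] at this; exact this
      have hCner : ∀ c ∈ C, c ≠ r := fun c hc => Finset.ne_of_mem_erase hc
      have hCcard : C.card = m := by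
        rw [hCdef, Finset.card_erase_of_mem
          (by rw [SimpleGraph.mem_neighborFinset]; exact hra.symm),
          SimpleGraph.card_neighborFinset_eq_degree, hnbr a hra]
        omega
      have dist_rx : ∀ x ∈ X, G.dist r x = 1 := fun x hx =>
        SimpleGraph.dist_eq_one_iff_adj.mpr (hadjX x hx)
      have dist_ac : ∀ c ∈ C, G.dist a c = 1 := fun c hc =>
        SimpleGraph.dist_eq_one_iff_adj.mpr (hCadj c hc)
      have dist_rc : ∀ c ∈ C, G.dist r c = 2 := fun c hc =>
        treeDist2 hT hra (hCadj c hc) (fun e' => hCner c hc e'.symm)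
      have hCX : ∀ c ∈ C, c ∉ X := by
        intro c hc hcX
        have h1 := dist_rx c hcX
        have h2 := dist_rc c hc
        omega
      have hrXC : r ∉ X ∪ C := by
        rw [Finset.mem_union]; rintro (hx | hx); exacts [hrX hx, hrC hx]
      have hdisjXC : Disjoint X C := Finset.disjoint_left.mpr (fun x hx hxC => hCX x hxC hx)
      refine ⟨insert r (X ∪ C), Finset.mem_insert_self _ _, ?_, ?_, ?_, ?_⟩
      · exact Finset.mem_insert_of_mem (Finset.mem_union_left _ haX)
      · rw [Finset.card_insert_of_notMem hrXC, Finset.card_union_of_disjoint hdisjXC,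
          hXcard, hCcard]
        omega
      · intro u huS w hwS hne
        rw [Finset.mem_insert, Finset.mem_union] at huS hwS
        rcases huS with rfl | hu | hu
        · rcases hwS with rfl | hw | hw
          · exact absurd rfl hne
          · exact Or.inl (dist_rx w hw)
          · exact Or.inr (Or.inl (dist_rc w hw))
        · rcases hwS with rfl | hw | hw
          · rw [SimpleGraph.dist_comm]; exact Or.inl (dist_rx u hu)
          · exact Or.inr (Or.inl (treeDist2 hT (hadjX u hu).symm (hadjX w hw) hne))
          · by_cases hua : u = a
            · subst hua; exact Or.inl (dist_ac w hw)
            · refine Or.inr (Or.inr (treeDist3 hT (hadjX u hu).symm hra (hCadj w hw)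
                (fun e' => hCX w hw (e' ▸ hu)) hua (fun e' => hCner w hw e'.symm)))
        · rcases hwS with rfl | hw | hw
          · rw [SimpleGraph.dist_comm]; exact Or.inr (Or.inl (dist_rc u hu))
          · by_cases hwa : w = a
            · subst hwa; rw [SimpleGraph.dist_comm]; exact Or.inl (dist_ac u hu)
            · rw [SimpleGraph.dist_comm]
              refine Or.inr (Or.inr (treeDist3 hT (hadjX w hw).symm hra (hCadj u hu)
                (fun e' => hCX u hu (e' ▸ hw)) hwa (fun e' => hCner u hu e'.symm)))
          · exact Or.inr (Or.inl (treeDist2 hT (hCadj u hu).symm (hCadj w hw) hne))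
      · intro u huS hunX hunr
        rw [Finset.mem_insert, Finset.mem_union] at huS
        rcases huS with rfl | hu | hu
        · exact absurd rfl hunr
        · exact absurd hu hunX
        · exact dist_ac u hu
    have hXne : X.Nonempty := by rw [← Finset.card_pos, hXcard]; omega
    suffices hZ : (h : ℤ) + (2 * (m : ℤ) - 1) * p ≤ (ℓ : ℤ) by
      have h2m : (1 : ℕ) ≤ 2 * m := by omega
      zify [h2m]
      push_cast
      linarith
    have hsepf : ∀ (S : Finset V),
        (∀ u ∈ S, ∀ w ∈ S, u ≠ w → (G.dist u w = 1 ∨ G.dist u w = 2 ∨ G.dist u w = 3)) →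
        ∀ u ∈ S, ∀ w ∈ S, u ≠ w → (p : ℤ) ≤ |(f u : ℤ) - (f w : ℤ)| := by
      intro S hdistS u hu w hw hne
      rcases hdistS u hu w hw hne with h1 | h23
      · exact le_trans hph' (hf1 u w h1)
      · exact hf2 u w h23
    by_cases hcase : ∃ x ∈ X, (f r : ℤ) < f x
    · obtain ⟨x₀, hx₀X, hx₀⟩ := hcase
      obtain ⟨a, haD, hamin⟩ := Finset.exists_min_image
        (X.filter (fun x => (f r : ℤ) < f x)) (fun x => (f x : ℤ))
        ⟨x₀, Finset.mem_filter.mpr ⟨hx₀X, hx₀⟩⟩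
      obtain ⟨haX, hra⟩ := Finset.mem_filter.mp haD
      obtain ⟨S, hrS, haS, hScard, hdistS, hdista⟩ := setup a haX
      have hcore := coreBound (ℓ := (ℓ : ℤ)) hp' hph' (fun v => (f v : ℤ)) S X r a hrS haS haX hrX
        (fun u _ => by show (0:ℤ) ≤ (f u : ℤ); positivity)
        (fun u _ => by show (f u : ℤ) ≤ (ℓ : ℤ); exact_mod_cast hfle u)
        (hsepf S hdistS)
        (fun u hu hX' hr' => hf1 a u (hdista u hu hX' hr'))
        (by
          refine hf1 a r ?_
          rw [SimpleGraph.dist_comm]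
          exact SimpleGraph.dist_eq_one_iff_adj.mpr (hadjX a haX))
        hra
        (fun x hxX _ hlt => hamin x (Finset.mem_filter.mpr ⟨hxX, hlt⟩))
      rw [hScard] at hcore
      push_cast at hcore
      linarith
    · push_neg at hcase
      obtain ⟨a, haX, hamax⟩ := Finset.exists_max_image X (fun x => (f x : ℤ)) hXne
      obtain ⟨S, hrS, haS, hScard, hdistS, hdista⟩ := setup a haX
      set g : V → ℤ := fun v => (ℓ : ℤ) - f v with hg
      have habs : ∀ u w : V, |g u - g w| = |(f u : ℤ) - f w| := by
        intro u w
        have he : g u - g w = -((f u : ℤ) - f w) := by simp only [hg]; ring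
        rw [he, abs_neg]
      have hfar : (f a : ℤ) < f r := by
        have hle := hcase a haX
        have hne : a ≠ r := fun e' => hrX (e' ▸ haX)
        have hsep1 := hsepf S hdistS a haS r hrS hne
        rcases lt_or_eq_of_le hle with hlt | heq
        · exact hlt
        · rw [heq, sub_self, abs_zero] at hsep1; linarith
      have hcore := coreBound (ℓ := (ℓ : ℤ)) hp' hph' g S X r a hrS haS haX hrX
        (fun u hu => by
          simp only [hg]
          have h1 : (f u : ℤ) ≤ ℓ := by exact_mod_cast hfle u
          linarith)
        (fun u _ => by
          simp only [hg]
          have h1 : (0 : ℤ) ≤ (f u : ℤ) := by positivity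
          linarith)
        (fun u hu w hw hne => by rw [habs]; exact hsepf S hdistS u hu w hw hne)
        (fun u hu hX' hr' => by rw [habs]; exact hf1 a u (hdista u hu hX' hr'))
        (by
          rw [habs]
          refine hf1 a r ?_
          rw [SimpleGraph.dist_comm]
          exact SimpleGraph.dist_eq_one_iff_adj.mpr (hadjX a haX))
        (by simp only [hg]; linarith [hfar])
        (fun x hxX _ _ => by
          have h1 := hamax x hxX
          simp only [hg]
          linarith)
      rw [hScard] at hcore
      push_cast at hcore
      linarith
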